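/- For the superpotential W(φ) = √(3/2)·(ε m e^{2αφ} + 2λ² m^{−1} e^{αφ}) with α² = 1/3, the identity V = (∂W/∂φ)² − W² reproduces the scalar potential V(φ) = ½ ε² m² e^{4αφ} − 2ελ² e^{3αφ} − Λ e^{2αφ} if and only if the constraint Λ = 4λ⁴/m² holds (for m ≠ 0). -/

import Mathlib

noncomputable section

/-- The superpotential `W(φ) = √(3/2)·(ε m e^{2αφ} + 2λ² m⁻¹ e^{αφ})`. -/
def Wsup (ε m lam α : ℝ) (φ : ℝ) : ℝ :=
  Real.sqrt (3 / 2) * (ε * m * Real.exp (2 * α * φ) + 2 * lam ^ 2 * m⁻¹ * Real.exp (α * φ))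

/-- The scalar potential `V(φ) = ½ ε² m² e^{4αφ} − 2ελ² e^{3αφ} − Λ e^{2αφ}`. -/
def Vpot (ε m lam Λ α : ℝ) (φ : ℝ) : ℝ :=
  (1 / 2) * ε ^ 2 * m ^ 2 * Real.exp (4 * α * φ)
    - 2 * ε * lam ^ 2 * Real.exp (3 * α * φ) - Λ * Real.exp (2 * α * φ)

lemma Wsup_hasDerivAt (ε m lam α φ : ℝ) :
    HasDerivAt (Wsup ε m lam α)
      (Real.sqrt (3 / 2) * (ε * m * (Real.exp (2 * α * φ) * (2 * α))
        + 2 * lam ^ 2 * m⁻¹ * (Real.exp (α * φ) * α))) φ := by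
  have h1 : HasDerivAt (fun φ : ℝ => Real.exp (2 * α * φ)) (Real.exp (2 * α * φ) * (2 * α)) φ := by
    simpa using (((hasDerivAt_id φ).const_mul (2 * α)).exp)
  have h2 : HasDerivAt (fun φ : ℝ => Real.exp (α * φ)) (Real.exp (α * φ) * α) φ := by
    simpa using (((hasDerivAt_id φ).const_mul α).exp)
  have H := ((h1.const_mul (ε * m)).add (h2.const_mul (2 * lam ^ 2 * m⁻¹))).const_mul
    (Real.sqrt (3 / 2))
  convert H using 2 <;> (try simp only [Wsup, Pi.add_apply]) <;> rfl

lemma Wsup_deriv (ε m lam α φ : ℝ) :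
    deriv (Wsup ε m lam α) φ
      = Real.sqrt (3 / 2) * (ε * m * (Real.exp (2 * α * φ) * (2 * α))
        + 2 * lam ^ 2 * m⁻¹ * (Real.exp (α * φ) * α)) :=
  (Wsup_hasDerivAt ε m lam α φ).deriv

/-- with `α² = 1/3` and `m ≠ 0`, the identity `V = (∂W/∂φ)² − W²` holds
(for all φ) if and only if the constraint `Λ = 4λ⁴/m²` holds. -/
theorem superpotential_reproduces_potential_iff_constraint
    (ε m lam Λ α : ℝ) (hm : m ≠ 0) (hα : α ^ 2 = 1 / 3)
    (hε : ε = -1 ∨ ε = 0 ∨ ε = 1) :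
    (∀ φ : ℝ, Vpot ε m lam Λ α φ
        = (deriv (Wsup ε m lam α) φ) ^ 2 - (Wsup ε m lam α φ) ^ 2)
      ↔ Λ = 4 * lam ^ 4 / m ^ 2 := by
  have key : ∀ φ : ℝ,
      (deriv (Wsup ε m lam α) φ) ^ 2 - (Wsup ε m lam α φ) ^ 2
        = Vpot ε m lam (4 * lam ^ 4 / m ^ 2) α φ := by
    intro φ
    rw [Wsup_deriv, Wsup, Vpot]
    have hs : Real.sqrt (3 / 2) ^ 2 = 3 / 2 := Real.sq_sqrt (by norm_num)
    set s := Real.sqrt (3 / 2) with hsdef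
    have hE2 : Real.exp (2 * α * φ) = Real.exp (α * φ) ^ 2 := by
      rw [sq, ← Real.exp_add]; ring_nf
    have hE3 : Real.exp (3 * α * φ) = Real.exp (α * φ) ^ 3 := by
      rw [pow_succ, sq, ← Real.exp_add, ← Real.exp_add]; ring_nf
    have hE4 : Real.exp (4 * α * φ) = Real.exp (α * φ) ^ 4 := by
      rw [show (4:ℝ) * α * φ = 2 * α * φ + 2 * α * φ by ring, Real.exp_add, hE2]; ring
    rw [hE2, hE3, hE4]
    set E := Real.exp (α * φ)
    field_simp
    ring_nf
    simp only [hs, hα]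
    ring
  constructor
  · intro h
    have h0 := h 0
    rw [key 0] at h0
    simp only [Vpot, mul_zero, Real.exp_zero, mul_one] at h0
    linarith
  · intro hΛ φ
    rw [hΛ, key]
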